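/- In Setting (V), assume additionally: ψ(a+b) ≤ C_ψ·(ψ(a) + ψ(b)) for all a, b ≥ 0 with C_ψ ≥ 1; the regularization functional is R(r̂) := Ř((I−P)(r⁻¹(r̂))) + R_P(P(r⁻¹(r̂))), where R_P: X → [0,∞] satisfies R_P(0) = 0 and R_P(v) ≥ γ·ψ(C_P·‖v‖^p) for all v, with γ > C_ψ and C_P ≥ 2^{p−1}·‖K‖^p·L_r^p; and Q(r(x†), r̂)^p ≤ C̃_Q·(Δ_ξ((I−P)(r⁻¹(r̂)), x†) + ψ(C_P·‖P(r⁻¹(r̂))‖^p)) for all r̂ ∈ X̃. Fix β > 0 and set C̄ := 2^{2p−2}·C_ψ; assume η ≤ C_η·δ^p, α ≤ β, and τ̲·δ^p ≤ α·(−ψ)*(−1/(2C̄α)) ≤ τ̄·δ^p with (−ψ)*(−1/(C̄α)) < ∞. Let the split-minimization pair (r̂_sm, x_sm) ∈ X̃ × U satisfy J_α(r̂_sm) ≤ J_α(r̂) + η for all r̂ ∈ X̃ and J_β(r̂_sm, x_sm) ≤ J_β(r̂_sm, x) + η for all x ∈ U, where J_α(r̂) := ‖K r̂ + F(x₀) −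 y^δ‖^p + α·R(r̂) and J_β(r̂, x) := β·Q(r(x), r̂)^p + ‖P(x)‖^p. Then there is a constant C depending only on p, b, γ, C_ψ, C̃_Q, C_η, τ̲, τ̄ such that: Δ_ξ((I−P)(r⁻¹(r̂_sm)), x†) + ψ(C_P·‖P(r⁻¹(r̂_sm))‖^p) + Q(r(x_sm), r̂_sm)^p + (1/β)·‖P(x_sm)‖^p ≤ C·(−ψ)*(−1/(2C̄α)) and ‖K(r̂_sm − r(x†))‖^p ≤ C·δ^p. -/

import Mathlib

/-- The convex conjugate of `-ψ`: `(-ψ)*(s) = sup_{t ≥ 0} (s·t + ψ(t)) ∈ [0,∞]`. -/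
noncomputable def negConj (ψ : ℝ → ℝ) (s : ℝ) : EReal :=
  ⨆ t : {t : ℝ // 0 ≤ t}, ((s * t.1 + ψ t.1 : ℝ) : EReal)


private lemma add_rpow_le' {a c p : ℝ} (ha : 0 ≤ a) (hc : 0 ≤ c) (hp : 1 ≤ p) :
    (a + c) ^ p ≤ 2 ^ (p - 1) * (a ^ p + c ^ p) := by
  lift a to NNReal using ha
  lift c to NNReal using hc
  have h := NNReal.rpow_add_le_mul_rpow_add_rpow a c hp
  exact_mod_cast h

set_option maxHeartbeats 1000000

universe u v w

/-- Convergence rates for the split minimization method (Theorem 2.5): there is a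
constant `C` depending only on `p, b, γ, C_ψ, C̃_Q, C_η, τ̲, τ̄` such that the split
minimizers satisfy the stated rate estimates. -/
theorem stmt_7 (p b γ Cψ CtQ Cη τl τu Cb : ℝ)
    (hp : 1 ≤ p) (hb0 : 0 < b) (hb1 : b < 1) (hCψ : 1 ≤ Cψ) (hγ : Cψ < γ)
    (hCtQ : 0 < CtQ) (hCη : 0 < Cη) (hτl : 0 < τl) (hτlu : τl ≤ τu)
    (hCb : Cb = (2 : ℝ) ^ (2 * p - 2) * Cψ) :
    ∃ C : ℝ, 0 < C ∧
      ∀ {X : Type u} {Xt : Type v} {Y : Type w}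
      [NormedAddCommGroup X] [NormedSpace ℝ X]
      [NormedAddCommGroup Xt] [NormedSpace ℝ Xt]
      [NormedAddCommGroup Y] [NormedSpace ℝ Y]
    
    (Xc : Submodule ℝ X) (U : Set X) (x0 xd : X)
    (hx0U : x0 ∈ U) (hx0c : x0 ∈ Xc) (hxdU : xd ∈ U) (hxdc : xd ∈ Xc)
    (F : X → Y) (K : Xt →L[ℝ] Y)
    (r : X → Xt) (rinv : Xt → X)
    (hrleft : ∀ x ∈ U, rinv (r x) = x)
    (hrmem : ∀ v : Xt, rinv v ∈ U) (hrright : ∀ v : Xt, r (rinv v) = v)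
    (Lr : ℝ) (hLr : ∀ x1 ∈ U, ∀ x2 ∈ U, ‖r x1 - r x2‖ ≤ Lr * ‖x1 - x2‖)
    (hRI : ∀ x ∈ U, F x - F x0 = K (r x))
    (P Ip : X → X) (hPIp : ∀ x, P x = x - Ip x)
    (hIpXc : ∀ x, Ip x ∈ Xc)
    (hPxd : P xd = 0) (hPx0 : P x0 = 0)
    (hIprinvU : ∀ v : Xt, Ip (rinv v) ∈ U)
    (δ : ℝ) (hδ : 0 < δ) (yδ : Y) (hnoise : ‖F xd - yδ‖ ≤ δ)
    (Rc : X → ℝ) (hRcnn : ∀ x, 0 ≤ Rc x)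
    (ξ : X →L[ℝ] ℝ) (hξ : ∀ xc ∈ Xc, ξ (xc - xd) ≤ Rc xc - Rc xd)
    (ψ : ℝ → ℝ) (hψcont : ContinuousOn ψ (Set.Ici (0 : ℝ)))
    (hψmono : MonotoneOn ψ (Set.Ici (0 : ℝ)))
    (hψ0 : ψ 0 = 0) (hψnn : ∀ t : ℝ, 0 ≤ t → 0 ≤ ψ t)
    (hVSC : ∀ xc, xc ∈ Xc → xc ∈ U →
      -(ξ (xc - xd)) ≤ b * (Rc xc - Rc xd - ξ (xc - xd)) + ψ (‖K (r xc - r xd)‖ ^ p))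
      (Q : Xt → Xt → ℝ) (hQnn : ∀ v1 v2, 0 ≤ Q v1 v2) (hQdiag : ∀ v, Q v v = 0)
      (hψsub : ∀ a c : ℝ, 0 ≤ a → 0 ≤ c → ψ (a + c) ≤ Cψ * (ψ a + ψ c))
      (RP : X → ℝ) (hRP0 : RP 0 = 0) (hRPnn : ∀ v, 0 ≤ RP v)
      (CP : ℝ) (hCP : (2 : ℝ) ^ (p - 1) * ‖K‖ ^ p * Lr ^ p ≤ CP)
      (hRPlb : ∀ v : X, γ * ψ (CP * ‖v‖ ^ p) ≤ RP v)
      (hQt : ∀ v : Xt, Q (r xd) v ^ p ≤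
        CtQ * ((Rc (Ip (rinv v)) - Rc xd - ξ (Ip (rinv v) - xd)) +
          ψ (CP * ‖P (rinv v)‖ ^ p)))
      (α β η : ℝ) (hα : 0 < α) (hβ : 0 < β) (hαβ : α ≤ β)
      (hη0 : 0 ≤ η) (hη : η ≤ Cη * δ ^ p)
      (hfin : negConj ψ (-(1 / (Cb * α))) ≠ ⊤)
      (hpar1 : ((τl * δ ^ p : ℝ) : EReal) ≤ (α : ℝ) * negConj ψ (-(1 / (2 * Cb * α))))
      (hpar2 : ((α : ℝ) : EReal) * negConj ψ (-(1 / (2 * Cb * α))) ≤ ((τu * δ ^ p : ℝ) : EReal))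
      (Jα : Xt → ℝ)
      (hJα : ∀ v, Jα v = ‖K v + F x0 - yδ‖ ^ p +
        α * (Rc (Ip (rinv v)) + RP (P (rinv v))))
      (Jβ : Xt → X → ℝ)
      (hJβ : ∀ v x, Jβ v x = β * Q (r x) v ^ p + ‖P x‖ ^ p)
      (rsm : Xt) (xsm : X) (_ : xsm ∈ U)
      (hmin1 : ∀ v : Xt, Jα rsm ≤ Jα v + η)
      (hmin2 : ∀ x ∈ U, Jβ rsm xsm ≤ Jβ rsm x + η),
      (Rc (Ip (rinv rsm)) - Rc xd - ξ (Ip (rinv rsm) - xd)) +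
          ψ (CP * ‖P (rinv rsm)‖ ^ p) +
          Q (r xsm) rsm ^ p + (1 / β) * ‖P xsm‖ ^ p ≤
        C * (negConj ψ (-(1 / (2 * Cb * α)))).toReal ∧
      ‖K (rsm - r xd)‖ ^ p ≤ C * δ ^ p := by

  -- positive exponent facts
  have hp0 : (0:ℝ) < p := lt_of_lt_of_le one_pos hp
  have hpne : p ≠ 0 := hp0.ne'
  have hτu : 0 < τu := lt_of_lt_of_le hτl hτlu
  have hCψ0 : (0:ℝ) < Cψ := lt_of_lt_of_le one_pos hCψ
  have hCb0 : 0 < Cb := by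
    rw [hCb]
    have := Real.rpow_pos_of_pos (by norm_num : (0:ℝ) < 2) (2 * p - 2)
    positivity
  -- the constants
  set m : ℝ := min (1 - b) (γ - Cψ) with hm
  have hm0 : 0 < m := lt_min (by linarith) (by linarith)
  set c2 : ℝ := (3/2 + Cη) / τl + Cψ with hc2
  have hc20 : 0 < c2 := by
    rw [hc2]
    have : 0 < (3/2 + Cη) / τl := by positivity
    linarith
  set c3 : ℝ := 3 + 2*Cη + 2*Cψ*τu with hc3
  have hc30 : 0 < c3 := by rw [hc3]; nlinarith
  set t2 : ℝ := (2:ℝ) ^ (p - 1) with ht2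
  have ht20 : 0 < t2 := Real.rpow_pos_of_pos (by norm_num) _
  set C1 : ℝ := (1 + CtQ) * (c2 / m) + Cη / τl with hC1
  set C2 : ℝ := t2 * (c3 + 1) with hC2
  have hC10 : 0 < C1 := by
    rw [hC1]
    have h1 : 0 < c2 / m := div_pos hc20 hm0
    have h2 : 0 < Cη / τl := div_pos hCη hτl
    nlinarith
  have hC20 : 0 < C2 := by rw [hC2]; positivity
  clear_value m c2 c3 t2 C1 C2
  have hCpos : 0 < max C1 C2 + 1 := by
    have := le_max_left C1 C2
    linarith
  refine ⟨max C1 C2 + 1, hCpos, ?_⟩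
  intro X Xt Y iX iX2 iXt iXt2 iY iY2 Xc U x0 xd hx0U hx0c hxdU hxdc F K r rinv hrleft hrmem
    hrright Lr hLr hRI P Ip hPIp hIpXc hPxd hPx0 hIprinvU δ hδ yδ hnoise Rc hRcnn ξ hξ
    ψ hψcont hψmono hψ0 hψnn hVSC Q hQnn hQdiag hψsub RP hRP0 hRPnn CP hCP hRPlb hQt
    α β η hα hβ hαβ hη0 hη hfin hpar1 hpar2 Jα hJα Jβ hJβ rsm xsm hxsmU hmin1 hmin2
  set s0 : ℝ := -(1 / (2 * Cb * α)) with hs0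
  have hδp : 0 < δ ^ p := Real.rpow_pos_of_pos hδ p
  -- extract real information from the EReal hypotheses
  have hNnn : (0:EReal) ≤ negConj ψ s0 := by
    have h0 : ((s0 * (0:ℝ) + ψ 0 : ℝ) : EReal) ≤ negConj ψ s0 :=
      le_iSup (fun t : {t : ℝ // 0 ≤ t} => ((s0 * t.1 + ψ t.1 : ℝ) : EReal)) ⟨0, le_refl 0⟩
    simpa [hψ0] using h0
  have hNne : negConj ψ s0 ≠ ⊤ := by
    intro htop
    rw [htop, EReal.mul_top_of_pos (by exact_mod_cast hα)] at hpar2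
    exact (EReal.coe_ne_top _) (top_le_iff.mp hpar2)
  have hNE : negConj ψ s0 = (((negConj ψ s0).toReal : ℝ) : EReal) := by
    refine (EReal.coe_toReal hNne ?_).symm
    intro hbot
    rw [hbot] at hNnn
    simp at hNnn
  set E : ℝ := (negConj ψ s0).toReal with hE
  clear_value s0 E
  have hE0 : 0 ≤ E := by
    have := hNnn
    rw [hNE] at this
    exact_mod_cast this
  have hpar1' : τl * δ ^ p ≤ α * E := by
    rw [hNE] at hpar1
    exact_mod_cast hpar1
  have hpar2' : α * E ≤ τu * δ ^ p := by
    rw [hNE] at hpar2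
    exact_mod_cast hpar2
  have hFY : ∀ t : ℝ, 0 ≤ t → ψ t ≤ E + 1 / (2 * Cb * α) * t := by
    intro t ht
    have h : ((s0 * t + ψ t : ℝ) : EReal) ≤ negConj ψ s0 :=
      le_iSup (fun u : {u : ℝ // 0 ≤ u} => ((s0 * u.1 + ψ u.1 : ℝ) : EReal)) ⟨t, ht⟩
    rw [hNE] at h
    have h2 : s0 * t + ψ t ≤ E := by exact_mod_cast h
    rw [hs0] at h2
    linarith
  have hIpxd : Ip xd = xd := by
    have h : xd - Ip xd = 0 := by rw [← hPIp xd, hPxd]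
    have := sub_eq_zero.mp h
    exact this.symm
  by_cases hLr0 : 0 ≤ Lr
  · -- main case
    have hxbU : rinv rsm ∈ U := hrmem rsm
    have hxcU : Ip (rinv rsm) ∈ U := hIprinvU rsm
    have hxcXc : Ip (rinv rsm) ∈ Xc := hIpXc (rinv rsm)
    have hz0 : 0 ≤ ‖P (rinv rsm)‖ ^ p := Real.rpow_nonneg (norm_nonneg _) p
    have hCP0 : 0 ≤ CP := by
      refine le_trans ?_ hCP
      have h1 : 0 ≤ ‖K‖ ^ p := Real.rpow_nonneg (norm_nonneg _) p
      have h2 : 0 ≤ Lr ^ p := Real.rpow_nonneg hLr0 p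
      positivity
    have hΨ0 : 0 ≤ ψ (CP * ‖P (rinv rsm)‖ ^ p) := hψnn _ (mul_nonneg hCP0 hz0)
    have hΔ0 : 0 ≤ Rc (Ip (rinv rsm)) - Rc xd - ξ (Ip (rinv rsm) - xd) := by
      have := hξ _ hxcXc
      linarith
    have hd0 : 0 ≤ ‖K rsm + F x0 - yδ‖ := norm_nonneg _
    have hdp0 : 0 ≤ ‖K rsm + F x0 - yδ‖ ^ p := Real.rpow_nonneg hd0 p
    have hBp0 : 0 ≤ ‖K (rsm - r xd)‖ ^ p := Real.rpow_nonneg (norm_nonneg _) p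
    -- Step 1 : minimality of rsm
    have hrinvrxd : rinv (r xd) = xd := hrleft xd hxdU
    have hKxd : K (r xd) + F x0 - yδ = F xd - yδ := by
      have h := hRI xd hxdU
      rw [← h]; abel
    have hstep1 : ‖K rsm + F x0 - yδ‖ ^ p
        + α * (Rc (Ip (rinv rsm)) + RP (P (rinv rsm)))
        ≤ δ ^ p + α * Rc xd + η := by
      have h := hmin1 (r xd)
      rw [hJα rsm, hJα (r xd), hrinvrxd, hIpxd, hPxd, hRP0, hKxd] at h
      have hδb : ‖F xd - yδ‖ ^ p ≤ δ ^ p :=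
        Real.rpow_le_rpow (norm_nonneg _) hnoise hp0.le
      linarith
    -- Bound on ‖K (rsm - r xd)‖ and its p-th power
    have hBsplit : K (rsm - r xd) = (K rsm + F x0 - yδ) - (F xd - yδ) := by
      have h := hRI xd hxdU
      rw [map_sub]
      rw [← h]
      abel
    have hBle : ‖K (rsm - r xd)‖ ≤ ‖K rsm + F x0 - yδ‖ + δ := by
      rw [hBsplit]
      refine le_trans (norm_sub_le _ _) ?_
      linarith [hnoise]
    have hBp : ‖K (rsm - r xd)‖ ^ p ≤ t2 * (‖K rsm + F x0 - yδ‖ ^ p + δ ^ p) := by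
      have h1 : ‖K (rsm - r xd)‖ ^ p ≤ (‖K rsm + F x0 - yδ‖ + δ) ^ p :=
        Real.rpow_le_rpow (norm_nonneg _) hBle hp0.le
      have h2 := add_rpow_le' hd0 hδ.le hp
      rw [← ht2] at h2
      linarith
    -- Bound on ‖K (r (Ip (rinv rsm)) - r xd)‖ ^ p
    have hW : ‖K (r (Ip (rinv rsm)) - r xd)‖ ^ p
        ≤ CP * ‖P (rinv rsm)‖ ^ p + t2 * ‖K (rsm - r xd)‖ ^ p := by
      have hrxb : r (rinv rsm) = rsm := hrright rsm
      have hA0 : 0 ≤ ‖K‖ * Lr * ‖P (rinv rsm)‖ := by positivity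
      have h1 : ‖K (r (Ip (rinv rsm)) - r xd)‖
          ≤ ‖K‖ * Lr * ‖P (rinv rsm)‖ + ‖K (rsm - r xd)‖ := by
        have hsplit : K (r (Ip (rinv rsm)) - r xd)
            = K (r (Ip (rinv rsm)) - r (rinv rsm)) + K (r (rinv rsm) - r xd) := by
          rw [← map_add]; congr 1; abel
        have h2 : ‖K (r (Ip (rinv rsm)) - r (rinv rsm))‖
            ≤ ‖K‖ * ‖r (Ip (rinv rsm)) - r (rinv rsm)‖ := K.le_opNorm _
        have h3 : ‖r (Ip (rinv rsm)) - r (rinv rsm)‖ ≤ Lr * ‖Ip (rinv rsm) - rinv rsm‖ :=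
          hLr _ hxcU _ hxbU
        have h4 : ‖Ip (rinv rsm) - rinv rsm‖ = ‖P (rinv rsm)‖ := by
          rw [hPIp (rinv rsm), norm_sub_rev]
        have h5 : ‖K (r (Ip (rinv rsm)) - r (rinv rsm))‖ ≤ ‖K‖ * Lr * ‖P (rinv rsm)‖ := by
          rw [h4] at h3
          calc ‖K (r (Ip (rinv rsm)) - r (rinv rsm))‖
              ≤ ‖K‖ * ‖r (Ip (rinv rsm)) - r (rinv rsm)‖ := h2
            _ ≤ ‖K‖ * (Lr * ‖P (rinv rsm)‖) :=
                mul_le_mul_of_nonneg_left h3 (norm_nonneg K)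
            _ = ‖K‖ * Lr * ‖P (rinv rsm)‖ := by ring
        calc ‖K (r (Ip (rinv rsm)) - r xd)‖
            ≤ ‖K (r (Ip (rinv rsm)) - r (rinv rsm))‖ + ‖K (r (rinv rsm) - r xd)‖ := by
              rw [hsplit]; exact norm_add_le _ _
          _ ≤ ‖K‖ * Lr * ‖P (rinv rsm)‖ + ‖K (rsm - r xd)‖ := by
              rw [hrxb] at h5 ⊢
              linarith [h5]
      have h6 : ‖K (r (Ip (rinv rsm)) - r xd)‖ ^ p
          ≤ (‖K‖ * Lr * ‖P (rinv rsm)‖ + ‖K (rsm - r xd)‖) ^ p :=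
        Real.rpow_le_rpow (norm_nonneg _) h1 hp0.le
      have h7 := add_rpow_le' hA0 (norm_nonneg (K (rsm - r xd))) hp
      rw [← ht2] at h7
      have h8 : (‖K‖ * Lr * ‖P (rinv rsm)‖) ^ p = ‖K‖ ^ p * Lr ^ p * ‖P (rinv rsm)‖ ^ p := by
        rw [Real.mul_rpow (by positivity) (norm_nonneg _),
          Real.mul_rpow (norm_nonneg _) hLr0]
      have h9 : t2 * (‖K‖ * Lr * ‖P (rinv rsm)‖) ^ p ≤ CP * ‖P (rinv rsm)‖ ^ p := by
        rw [h8]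
        have : t2 * (‖K‖ ^ p * Lr ^ p * ‖P (rinv rsm)‖ ^ p)
            = (t2 * ‖K‖ ^ p * Lr ^ p) * ‖P (rinv rsm)‖ ^ p := by ring
        rw [this]
        exact mul_le_mul_of_nonneg_right hCP hz0
      calc ‖K (r (Ip (rinv rsm)) - r xd)‖ ^ p
          ≤ (‖K‖ * Lr * ‖P (rinv rsm)‖ + ‖K (rsm - r xd)‖) ^ p := h6
        _ ≤ t2 * ((‖K‖ * Lr * ‖P (rinv rsm)‖) ^ p + ‖K (rsm - r xd)‖ ^ p) := h7
        _ = t2 * (‖K‖ * Lr * ‖P (rinv rsm)‖) ^ p + t2 * ‖K (rsm - r xd)‖ ^ p := by ring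
        _ ≤ CP * ‖P (rinv rsm)‖ ^ p + t2 * ‖K (rsm - r xd)‖ ^ p := by linarith
    -- monotonicity + subadditivity of ψ
    have h2B0 : 0 ≤ t2 * ‖K (rsm - r xd)‖ ^ p := mul_nonneg ht20.le hBp0
    have hψW : ψ (‖K (r (Ip (rinv rsm)) - r xd)‖ ^ p)
        ≤ Cψ * (ψ (CP * ‖P (rinv rsm)‖ ^ p) + ψ (t2 * ‖K (rsm - r xd)‖ ^ p)) := by
      have hmem1 : ‖K (r (Ip (rinv rsm)) - r xd)‖ ^ p ∈ Set.Ici (0:ℝ) :=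
        Real.rpow_nonneg (norm_nonneg _) p
      have hmem2 : CP * ‖P (rinv rsm)‖ ^ p + t2 * ‖K (rsm - r xd)‖ ^ p ∈ Set.Ici (0:ℝ) :=
        add_nonneg (mul_nonneg hCP0 hz0) h2B0
      exact le_trans (hψmono hmem1 hmem2 hW) (hψsub _ _ (mul_nonneg hCP0 hz0) h2B0)
    -- Fenchel-Young on ψ (t2 * B^p)
    have hkey : α * Cψ * (1 / (2 * Cb * α)) * (t2 * t2) = 1/2 := by
      have ht22 : t2 * t2 = (2:ℝ) ^ (2 * p - 2) := by
        rw [ht2, ← Real.rpow_add (by norm_num : (0:ℝ) < 2)]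
        congr 1
        ring
      rw [ht22, hCb]
      have h2p : ((2:ℝ) ^ (2 * p - 2)) ≠ 0 :=
        (Real.rpow_pos_of_pos (by norm_num) _).ne'
      field_simp
    have hchain : α * Cψ * ψ (t2 * ‖K (rsm - r xd)‖ ^ p)
        ≤ α * Cψ * E + (1/2) * (‖K rsm + F x0 - yδ‖ ^ p + δ ^ p) := by
      have h1 := hFY (t2 * ‖K (rsm - r xd)‖ ^ p) h2B0
      have h2 : α * Cψ * ψ (t2 * ‖K (rsm - r xd)‖ ^ p)
          ≤ α * Cψ * (E + 1 / (2 * Cb * α) * (t2 * ‖K (rsm - r xd)‖ ^ p)) :=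
        mul_le_mul_of_nonneg_left h1 (by positivity)
      have hc : 0 ≤ α * Cψ * (1 / (2 * Cb * α)) * t2 := by positivity
      have h3 : α * Cψ * (1 / (2 * Cb * α)) * t2 * ‖K (rsm - r xd)‖ ^ p
          ≤ α * Cψ * (1 / (2 * Cb * α)) * t2
            * (t2 * (‖K rsm + F x0 - yδ‖ ^ p + δ ^ p)) :=
        mul_le_mul_of_nonneg_left hBp hc
      have h4 : α * Cψ * (1 / (2 * Cb * α)) * t2
            * (t2 * (‖K rsm + F x0 - yδ‖ ^ p + δ ^ p))
          = (1/2) * (‖K rsm + F x0 - yδ‖ ^ p + δ ^ p) := by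
        linear_combination (‖K rsm + F x0 - yδ‖ ^ p + δ ^ p) * hkey
      linarith [h2, h3, h4]
    -- VSC step, multiplied by α
    have hvsc := hVSC _ hxcXc hxcU
    have hvsc2 : (1 - b) * (Rc (Ip (rinv rsm)) - Rc xd - ξ (Ip (rinv rsm) - xd))
        ≤ (Rc (Ip (rinv rsm)) - Rc xd)
          + Cψ * ψ (CP * ‖P (rinv rsm)‖ ^ p) + Cψ * ψ (t2 * ‖K (rsm - r xd)‖ ^ p) := by
      linarith [hvsc, hψW]
    have hvscα : α * ((1 - b) * (Rc (Ip (rinv rsm)) - Rc xd - ξ (Ip (rinv rsm) - xd)))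
        ≤ α * ((Rc (Ip (rinv rsm)) - Rc xd)
          + Cψ * ψ (CP * ‖P (rinv rsm)‖ ^ p) + Cψ * ψ (t2 * ‖K (rsm - r xd)‖ ^ p)) :=
      mul_le_mul_of_nonneg_left hvsc2 hα.le
    have hRPα : α * (γ * ψ (CP * ‖P (rinv rsm)‖ ^ p)) ≤ α * RP (P (rinv rsm)) :=
      mul_le_mul_of_nonneg_left (hRPlb (P (rinv rsm))) hα.le
    -- main estimate
    have hmain : α * ((1 - b) * (Rc (Ip (rinv rsm)) - Rc xd - ξ (Ip (rinv rsm) - xd)))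
        + α * ((γ - Cψ) * ψ (CP * ‖P (rinv rsm)‖ ^ p))
        + (1/2) * ‖K rsm + F x0 - yδ‖ ^ p
        ≤ (3/2) * δ ^ p + η + α * Cψ * E := by
      linarith [hvscα, hstep1, hRPα, hchain]
    -- Δ + Ψ bound
    have hrhs : (3/2) * δ ^ p + η + α * Cψ * E ≤ α * (c2 * E) := by
      have h1 : (3/2) * δ ^ p + η ≤ (3/2 + Cη) * δ ^ p := by linarith
      have h2 : (3/2 + Cη) * δ ^ p = ((3/2 + Cη) / τl) * (τl * δ ^ p) := by
        field_simp
      have h3 : ((3/2 + Cη) / τl) * (τl * δ ^ p) ≤ ((3/2 + Cη) / τl) * (α * E) :=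
        mul_le_mul_of_nonneg_left hpar1' (by positivity)
      have h4 : ((3/2 + Cη) / τl) * (α * E) + α * Cψ * E = α * (c2 * E) := by
        rw [hc2]; ring
      linarith
    have hDPsi : (Rc (Ip (rinv rsm)) - Rc xd - ξ (Ip (rinv rsm) - xd))
        + ψ (CP * ‖P (rinv rsm)‖ ^ p) ≤ (c2 / m) * E := by
      have hm1 : m ≤ 1 - b := hm ▸ min_le_left _ _
      have hm2 : m ≤ γ - Cψ := hm ▸ min_le_right _ _
      have h1 : α * (m * ((Rc (Ip (rinv rsm)) - Rc xd - ξ (Ip (rinv rsm) - xd))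
          + ψ (CP * ‖P (rinv rsm)‖ ^ p))) ≤ α * (c2 * E) := by
        linarith [hmain, hrhs, hdp0,
          mul_le_mul_of_nonneg_left (mul_le_mul_of_nonneg_right hm1 hΔ0) hα.le,
          mul_le_mul_of_nonneg_left (mul_le_mul_of_nonneg_right hm2 hΨ0) hα.le]
      have h2 := (mul_le_mul_iff_right₀ hα).mp h1
      rw [div_mul_eq_mul_div, le_div_iff₀ hm0]
      linarith
    -- d^p bound
    have hdbound : ‖K rsm + F x0 - yδ‖ ^ p ≤ c3 * δ ^ p := by
      have h1 : α * Cψ * E ≤ Cψ * (τu * δ ^ p) := by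
        have := mul_le_mul_of_nonneg_left hpar2' hCψ0.le
        linarith [this]
      have h2 : α * ((1 - b) * (Rc (Ip (rinv rsm)) - Rc xd - ξ (Ip (rinv rsm) - xd))) ≥ 0 :=
        mul_nonneg hα.le (mul_nonneg (by linarith) hΔ0)
      have h3 : α * ((γ - Cψ) * ψ (CP * ‖P (rinv rsm)‖ ^ p)) ≥ 0 :=
        mul_nonneg hα.le (mul_nonneg (by linarith) hΨ0)
      rw [hc3]
      linarith [hmain, h1, h2, h3]
    -- Step 3 : minimality of xsm
    have hstep3 : Q (r xsm) rsm ^ p + (1/β) * ‖P xsm‖ ^ p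
        ≤ CtQ * ((Rc (Ip (rinv rsm)) - Rc xd - ξ (Ip (rinv rsm) - xd))
          + ψ (CP * ‖P (rinv rsm)‖ ^ p)) + η / β := by
      have h := hmin2 xd hxdU
      rw [hJβ rsm xsm, hJβ rsm xd, hPxd, norm_zero, Real.zero_rpow hpne] at h
      have hQb := hQt rsm
      have hprod : β * (Q (r xd) rsm ^ p)
          ≤ β * (CtQ * ((Rc (Ip (rinv rsm)) - Rc xd - ξ (Ip (rinv rsm) - xd))
            + ψ (CP * ‖P (rinv rsm)‖ ^ p))) :=
        mul_le_mul_of_nonneg_left hQb hβ.le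
      have hraw : β * (Q (r xsm) rsm ^ p) + ‖P xsm‖ ^ p
          ≤ β * (CtQ * ((Rc (Ip (rinv rsm)) - Rc xd - ξ (Ip (rinv rsm) - xd))
            + ψ (CP * ‖P (rinv rsm)‖ ^ p))) + η := by linarith
      have hβ' : β ≠ 0 := hβ.ne'
      have e1 : β * (Q (r xsm) rsm ^ p + (1/β) * ‖P xsm‖ ^ p)
          = β * (Q (r xsm) rsm ^ p) + ‖P xsm‖ ^ p := by
        field_simp
      have e2 : β * (CtQ * ((Rc (Ip (rinv rsm)) - Rc xd - ξ (Ip (rinv rsm) - xd))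
            + ψ (CP * ‖P (rinv rsm)‖ ^ p)) + η / β)
          = β * (CtQ * ((Rc (Ip (rinv rsm)) - Rc xd - ξ (Ip (rinv rsm) - xd))
            + ψ (CP * ‖P (rinv rsm)‖ ^ p))) + η := by
        field_simp
      refine (mul_le_mul_iff_right₀ hβ).mp ?_
      rw [e1, e2]
      exact hraw
    have hηβ : η / β ≤ (Cη / τl) * E := by
      have h1 : η / β ≤ η / α := div_le_div_of_nonneg_left hη0 hα hαβ
      have h2 : η / α ≤ (Cη / τl) * E := by
        rw [div_le_iff₀ hα]
        calc η ≤ Cη * δ ^ p := hη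
          _ = (Cη / τl) * (τl * δ ^ p) := by field_simp
          _ ≤ (Cη / τl) * (α * E) :=
              mul_le_mul_of_nonneg_left hpar1' (by positivity)
          _ = Cη / τl * E * α := by ring
      linarith
    constructor
    · -- first conclusion
      have hCtQDPsi : CtQ * ((Rc (Ip (rinv rsm)) - Rc xd - ξ (Ip (rinv rsm) - xd))
          + ψ (CP * ‖P (rinv rsm)‖ ^ p)) ≤ CtQ * ((c2 / m) * E) :=
        mul_le_mul_of_nonneg_left hDPsi hCtQ.le
      have hC1C : C1 * E ≤ (max C1 C2 + 1) * E := by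
        refine mul_le_mul_of_nonneg_right ?_ hE0
        have := le_max_left C1 C2
        linarith
      have hC1eq : C1 * E = (c2 / m) * E + CtQ * ((c2 / m) * E) + (Cη / τl) * E := by
        rw [hC1]; ring
      linarith [hDPsi, hstep3, hηβ, hCtQDPsi, hC1C]
    · -- second conclusion
      have h1 : ‖K (rsm - r xd)‖ ^ p ≤ t2 * (c3 * δ ^ p + δ ^ p) := by
        refine le_trans hBp ?_
        exact mul_le_mul_of_nonneg_left (by linarith) ht20.le
      have h2 : t2 * (c3 * δ ^ p + δ ^ p) = C2 * δ ^ p := by rw [hC2]; ring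
      have h3 : C2 * δ ^ p ≤ (max C1 C2 + 1) * δ ^ p := by
        refine mul_le_mul_of_nonneg_right ?_ hδp.le
        have := le_max_right C1 C2
        linarith
      linarith
  · -- degenerate case : Lr < 0, so U is a single point
    push_neg at hLr0
    have hUeq : ∀ x1 ∈ U, ∀ x2 ∈ U, x1 = x2 := by
      intro x1 h1 x2 h2
      by_contra hne
      have h := hLr x1 h1 x2 h2
      have hpos : 0 < ‖x1 - x2‖ := by
        rw [norm_pos_iff, sub_ne_zero]
        exact hne
      nlinarith [norm_nonneg (r x1 - r x2)]
    have hxbeq : rinv rsm = xd := hUeq _ (hrmem rsm) _ hxdU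
    have hrsmeq : rsm = r xd := by rw [← hrright rsm, hxbeq]
    have hxsmeq : xsm = xd := hUeq _ hxsmU _ hxdU
    constructor
    · have e0 : ((0:ℝ)) ^ p = 0 := Real.zero_rpow hpne
      rw [hxbeq, hIpxd, hPxd, hxsmeq, hPxd, ← hrsmeq, hQdiag]
      rw [norm_zero, e0, mul_zero, hψ0]
      simp only [sub_self, map_zero, sub_zero, add_zero, zero_add, mul_zero]
      exact mul_nonneg hCpos.le hE0
    · rw [hrsmeq, sub_self, map_zero, norm_zero, Real.zero_rpow hpne]
      exact mul_nonneg hCpos.le hδp.le
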